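/- (Ergodicity in total variation implies triviality of time-space harmonic functions) Let E be a measurable space and let (κ_t)_{t ≥ 0} be a semigroup of Markov kernels from E to E (κ_0(x,·) = δ_x and κ_{t+s}(x,A) = ∫ κ_s(y,A) κ_t(x,dy) for all s,t ≥ 0). Assume that for all probability measures μ, ν on E, sup_{A measurable} |μκ_t(A) − νκ_t(A)| → 0 as t → ∞, where μκ_t(A) := ∫ κ_t(x,A) μ(dx). Then every bounded measurable function u : [0,∞) × E → ℝ satisfying u(t,x) = ∫ u(t+s,y) κ_s(x,dy) for all s, t ≥ 0 and all x ∈ E is constant. -/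

import Mathlib

open MeasureTheory ProbabilityTheory Filter Set
open scoped ENNReal

lemma tv_integral_diff_le {E : Type*} [MeasurableSpace E] (α β : Measure E)
    [IsProbabilityMeasure α] [IsProbabilityMeasure β]
    (f : E → ℝ) (hf : Measurable f) (C : ℝ) (hfb : ∀ x, |f x| ≤ C)
    (ε : ℝ≥0∞) (hεtop : ε ≠ ⊤)
    (hε : ∀ A : Set E, MeasurableSet A → α A - β A ≤ ε) :
    ∫ x, f x ∂α - ∫ x, f x ∂β ≤ 2 * C * ε.toReal := by
  obtain ⟨x0⟩ : Nonempty E := by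
    by_contra h
    simp only [not_nonempty_iff] at h
    have := measure_univ (μ := α)
    simp [Set.univ_eq_empty_iff.2 h] at this
  have hC : 0 ≤ C := le_trans (abs_nonneg _) (hfb x0)
  set g : E → ℝ := fun x => f x + C with hg
  have hg0 : ∀ x, 0 ≤ g x := fun x => by
    have := (abs_le.1 (hfb x)).1; simp only [hg]; linarith
  have hg2C : ∀ x, g x ≤ 2 * C := fun x => by
    have := (abs_le.1 (hfb x)).2; simp only [hg]; linarith
  have hgm : Measurable g := hf.add_const C
  have layer : ∀ γ : Measure E, ∫⁻ x, ENNReal.ofReal (g x) ∂γ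
      = ∫⁻ t in Ioi (0:ℝ), γ {a | t < g a} := fun γ =>
    lintegral_eq_lintegral_meas_lt γ (Filter.Eventually.of_forall hg0) hgm.aemeasurable
  have key : ∫⁻ x, ENNReal.ofReal (g x) ∂α
      ≤ ∫⁻ x, ENNReal.ofReal (g x) ∂β + ε * ENNReal.ofReal (2 * C) := by
    rw [layer α, layer β]
    have mono : ∫⁻ t in Ioi (0:ℝ), α {a | t < g a}
        ≤ ∫⁻ t in Ioi (0:ℝ), (β {a | t < g a} + (Ioc (0:ℝ) (2*C)).indicator (fun _ => ε) t) := by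
      refine lintegral_mono_ae ((ae_restrict_iff' measurableSet_Ioi).2
        (Filter.Eventually.of_forall fun t ht => ?_))
      by_cases h2C : t ≤ 2 * C
      · have hA : α {a | t < g a} ≤ β {a | t < g a} + ε :=
          tsub_le_iff_left.mp (hε {a | t < g a} (measurableSet_lt measurable_const hgm))
        rwa [Set.indicator_of_mem (show t ∈ Ioc (0:ℝ) (2*C) from ⟨ht, h2C⟩)]
      · have hempty : {a | t < g a} = (∅ : Set E) := by
          ext a; simp only [Set.mem_setOf_eq, Set.mem_empty_iff_false, iff_false, not_lt]
          exact le_trans (hg2C a) (le_of_not_ge h2C)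
        simp [hempty]
    refine le_trans mono ?_
    rw [lintegral_add_right _ ((measurable_const (a := ε)).indicator measurableSet_Ioc)]
    gcongr
    rw [lintegral_indicator measurableSet_Ioc, setLIntegral_const,
      Measure.restrict_apply measurableSet_Ioc,
      Set.inter_eq_self_of_subset_left Ioc_subset_Ioi_self, Real.volume_Ioc]
    gcongr
    simp
  have hfin : ∀ γ : Measure E, IsProbabilityMeasure γ →
      ∫⁻ x, ENNReal.ofReal (g x) ∂γ ≤ ENNReal.ofReal (2 * C) := by
    intro γ hγ
    calc ∫⁻ x, ENNReal.ofReal (g x) ∂γ ≤ ∫⁻ _, ENNReal.ofReal (2 * C) ∂γ :=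
          lintegral_mono fun x => ENNReal.ofReal_le_ofReal (hg2C x)
      _ = ENNReal.ofReal (2 * C) := by simp
  have hαfin : ∫⁻ x, ENNReal.ofReal (g x) ∂α ≠ ⊤ :=
    ne_top_of_le_ne_top ENNReal.ofReal_ne_top (hfin α inferInstance)
  have hβfin : ∫⁻ x, ENNReal.ofReal (g x) ∂β ≠ ⊤ :=
    ne_top_of_le_ne_top ENNReal.ofReal_ne_top (hfin β inferInstance)
  have hint : ∀ γ : Measure E, ∫ x, g x ∂γ
      = (∫⁻ x, ENNReal.ofReal (g x) ∂γ).toReal := fun γ =>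
    integral_eq_lintegral_of_nonneg_ae (Filter.Eventually.of_forall hg0)
      hgm.aestronglyMeasurable
  have hgdiff : ∫ x, g x ∂α - ∫ x, g x ∂β ≤ 2 * C * ε.toReal := by
    rw [hint α, hint β]
    have h2 := ENNReal.toReal_mono
      (ENNReal.add_ne_top.2 ⟨hβfin, ENNReal.mul_ne_top hεtop ENNReal.ofReal_ne_top⟩) key
    rw [ENNReal.toReal_add hβfin (ENNReal.mul_ne_top hεtop ENNReal.ofReal_ne_top),
      ENNReal.toReal_mul, ENNReal.toReal_ofReal (by positivity)] at h2
    linarith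
  have hfint : ∀ γ : Measure E, IsProbabilityMeasure γ → Integrable f γ := by
    intro γ hγ
    exact (integrable_const C).mono' hf.aestronglyMeasurable
      (Filter.Eventually.of_forall fun x => by simpa using hfb x)
  have expand : ∀ γ : Measure E, IsProbabilityMeasure γ →
      ∫ x, g x ∂γ = ∫ x, f x ∂γ + C := by
    intro γ hγ
    simp only [hg]
    rw [integral_add (hfint γ hγ) (integrable_const C)]
    simp
  rw [expand α inferInstance, expand β inferInstance] at hgdiff
  linarith

/-- **Ergodicity in total variation implies triviality of time-space harmonic functions.**
Let `(κ t)_{t ≥ 0}` be a semigroup of Markov kernels on a measurable space `E`. If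
`sup_A |μκ_t(A) − νκ_t(A)| → 0` as `t → ∞` for all probability measures `μ`, `ν`, then
every bounded measurable time-space harmonic function `u : [0,∞) × E → ℝ` (i.e. one with
`u(t,x) = ∫ u(t+s,y) κ_s(x,dy)` for all `s,t ≥ 0` and `x`) is constant. -/
theorem timeSpace_harmonic_constant_of_TV_ergodic {E : Type*} [MeasurableSpace E]
    (κ : ℝ → Kernel E E) (hmk : ∀ t, 0 ≤ t → IsMarkovKernel (κ t))
    (h0 : ∀ x, κ 0 x = Measure.dirac x)
    (hsemi : ∀ s t, 0 ≤ s → 0 ≤ t → ∀ x, κ (t + s) x = (κ t x).bind (κ s))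
    (hTV : ∀ μ ν : Measure E, IsProbabilityMeasure μ → IsProbabilityMeasure ν →
      Tendsto (fun t : ℝ => ⨆ (A : Set E) (_ : MeasurableSet A),
          max ((μ.bind (κ t)) A - (ν.bind (κ t)) A) ((ν.bind (κ t)) A - (μ.bind (κ t)) A))
        atTop (nhds 0))
    (u : ℝ → E → ℝ) (hu : Measurable (Function.uncurry u))
    (hub : ∃ C, ∀ t x, |u t x| ≤ C)
    (hharm : ∀ s t, 0 ≤ s → 0 ≤ t → ∀ x, u t x = ∫ y, u (t + s) y ∂(κ s x)) :
    ∀ t x t' x', 0 ≤ t → 0 ≤ t' → u t x = u t' x' := by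
  obtain ⟨C, hC⟩ := hub
  have hbind : ∀ (γ : Measure E), IsProbabilityMeasure γ → ∀ s, 0 ≤ s →
      IsProbabilityMeasure (γ.bind (κ s)) := by
    intro γ hγ s hs
    haveI := hmk s hs
    constructor
    rw [Measure.bind_apply MeasurableSet.univ (κ s).measurable.aemeasurable]
    simp [measure_univ]
  suffices key : ∀ t x t' x', 0 ≤ t → t ≤ t' → u t x = u t' x' by
    intro t x t' x' ht ht'
    rcases le_total t t' with h | h
    · exact key t x t' x' ht h
    · exact (key t' x' t x ht' h).symm
  intro t x t' x' ht htt'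
  have ht' : 0 ≤ t' := ht.trans htt'
  have hd : 0 ≤ t' - t := by linarith
  haveI := hmk (t' - t) hd
  set μ : Measure E := κ (t' - t) x with hμ
  set ν : Measure E := Measure.dirac x' with hν
  haveI hμP : IsProbabilityMeasure μ := inferInstance
  haveI hνP : IsProbabilityMeasure ν := inferInstance
  have eq1 : ∀ s, 0 ≤ s → u t x = ∫ y, u (t' + s) y ∂(μ.bind (κ s)) := by
    intro s hs
    have h1 := hharm ((t' - t) + s) t (by linarith) ht x
    have h2 : κ ((t' - t) + s) x = μ.bind (κ s) := hsemi s (t' - t) hs hd x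
    have h3 : t + ((t' - t) + s) = t' + s := by ring
    rw [h3, h2] at h1
    exact h1
  have eq2 : ∀ s, 0 ≤ s → u t' x' = ∫ y, u (t' + s) y ∂(ν.bind (κ s)) := by
    intro s hs
    have h2 : ν.bind (κ s) = κ s x' := Measure.dirac_bind (κ s).measurable x'
    rw [h2]
    exact hharm s t' hs ht' x'
  set εf : ℝ → ℝ≥0∞ := fun s => ⨆ (A : Set E) (_ : MeasurableSet A),
      max ((μ.bind (κ s)) A - (ν.bind (κ s)) A) ((ν.bind (κ s)) A - (μ.bind (κ s)) A)
    with hεf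
  have hε1 : ∀ s, 0 ≤ s → εf s ≤ 1 := by
    intro s hs
    haveI := hbind μ hμP s hs
    haveI := hbind ν hνP s hs
    refine iSup₂_le fun A hA => max_le ?_ ?_ <;>
      exact le_trans tsub_le_self prob_le_one
  have habs : ∀ s, 0 ≤ s → |u t x - u t' x'| ≤ 2 * C * (εf s).toReal := by
    intro s hs
    haveI := hbind μ hμP s hs
    haveI := hbind ν hνP s hs
    have hm : Measurable (u (t' + s)) :=
      hu.comp (measurable_const.prodMk measurable_id)
    have htop : εf s ≠ ⊤ := ne_top_of_le_ne_top ENNReal.one_ne_top (hε1 s hs)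
    have hεle1 : ∀ A : Set E, MeasurableSet A →
        (μ.bind (κ s)) A - (ν.bind (κ s)) A ≤ εf s := fun A hA =>
      le_iSup_of_le A (le_iSup_of_le hA (le_max_left _ _))
    have hεle2 : ∀ A : Set E, MeasurableSet A →
        (ν.bind (κ s)) A - (μ.bind (κ s)) A ≤ εf s := fun A hA =>
      le_iSup_of_le A (le_iSup_of_le hA (le_max_right _ _))
    have b1 := tv_integral_diff_le (μ.bind (κ s)) (ν.bind (κ s)) (u (t' + s))
      hm C (fun y => hC _ y) (εf s) htop hεle1
    have b2 := tv_integral_diff_le (ν.bind (κ s)) (μ.bind (κ s)) (u (t' + s))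
      hm C (fun y => hC _ y) (εf s) htop hεle2
    rw [← eq1 s hs, ← eq2 s hs] at b1 b2
    rw [abs_sub_le_iff]
    exact ⟨b1, b2⟩
  have hlim : Tendsto (fun s => 2 * C * (εf s).toReal) atTop (nhds 0) := by
    have h1 : Tendsto εf atTop (nhds 0) := hTV μ ν hμP hνP
    have h2 : Tendsto (fun s => (εf s).toReal) atTop (nhds 0) := by
      have := (ENNReal.tendsto_toReal (a := 0) (by simp)).comp h1
      simpa [Function.comp_def] using this
    simpa using h2.const_mul (2 * C)
  have : |u t x - u t' x'| ≤ 0 :=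
    ge_of_tendsto hlim ((eventually_ge_atTop 0).mono fun s hs => habs s hs)
  have := abs_nonpos_iff.mp this
  linarith [sub_eq_zero.mp this]
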